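/- Let q > 2 be a prime power and let μ be an integer with 1 ≤ μ ≤ q+2. Then every set S of q+μ+1 points of PG(2,q) has the property that each point Q ∈ PG(2,q) \ S lies on at least μ unordered pairs of distinct points of S collinear with Q; consequently, if S ≠ PG(2,q) then S is a (1,μ)-saturating set, and every minimal (1,μ)-saturating set in PG(2,q) has size at most q+μ+1. -/

import Mathlib

open Module

/-- Points of `PG(N,q)`: 1-dimensional subspaces of `F^(N+1)`. -/
abbrev PGPoint (F : Type) [Field F] (N : ℕ) :=
  {W : Submodule F (Fin (N + 1) → F) // Module.finrank F W = 1}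

/-- Lines of `PG(N,q)`: 2-dimensional subspaces of `F^(N+1)`. -/
abbrev PGLine (F : Type) [Field F] (N : ℕ) :=
  {W : Submodule F (Fin (N + 1) → F) // Module.finrank F W = 2}

/-- The number of points of `S` lying on the line `L`. -/
noncomputable def lineCount {F : Type} [Field F] {N : ℕ}
    (S : Set (PGPoint F N)) (L : PGLine F N) : ℕ :=
  {P : PGPoint F N | P ∈ S ∧ P.1 ≤ L.1}.ncard

/-- The number of unordered pairs of distinct points of `S` collinear with `Q`
(the number of secants of `S` through `Q`, counted with multiplicity). -/
noncomputable def pairCount {F : Type} [Field F] {N : ℕ}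
    (S : Set (PGPoint F N)) (Q : PGPoint F N) : ℕ :=
  {e : Set (PGPoint F N) |
    ∃ A ∈ S, ∃ B ∈ S, A ≠ B ∧ e = {A, B} ∧ Q.1 ≤ A.1 ⊔ B.1}.ncard

/-- `S` spans (generates) `PG(N,q)`. -/
def Spans {F : Type} [Field F] {N : ℕ} (S : Set (PGPoint F N)) : Prop :=
  (⨆ P ∈ S, P.1) = ⊤

/-- `S` is a `(1,μ)`-saturating set. -/
def IsSaturating {F : Type} [Field F] {N : ℕ} (S : Set (PGPoint F N)) (μ : ℕ) : Prop :=
  Spans S ∧ S ≠ Set.univ ∧ ∀ Q : PGPoint F N, Q ∉ S → μ ≤ pairCount S Q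

/-- `S` is an optimal `(1,μ)`-saturating set (`(1,μ)`-OS set). -/
def IsOS {F : Type} [Field F] {N : ℕ} (S : Set (PGPoint F N)) (μ : ℕ) : Prop :=
  Spans S ∧ S ≠ Set.univ ∧ ∀ Q : PGPoint F N, Q ∉ S → pairCount S Q = μ

/-- `S` is a minimal `(1,μ)`-saturating set: no proper subset is `(1,μ)`-saturating. -/
def IsMinimalSaturating {F : Type} [Field F] {N : ℕ} (S : Set (PGPoint F N)) (μ : ℕ) : Prop :=
  IsSaturating S μ ∧ ∀ T : Set (PGPoint F N), T ⊂ S → ¬ IsSaturating T μ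

/-! ### Auxiliary counting lemmas -/

/-- The number of 1-dimensional subspaces of a vector space of dimension at most 2
over a finite field with `q` elements is at most `q + 1`. -/
lemma card_one_dim_le {F : Type} [Field F] [Fintype F]
    {V : Type} [AddCommGroup V] [Module F V] [FiniteDimensional F V]
    (h2 : finrank F V ≤ 2) :
    {W : Submodule F V | finrank F W = 1}.ncard ≤ Fintype.card F + 1 := by
  classical
  set q := Fintype.card F with hq
  have hq2 : 2 ≤ q := Fintype.one_lt_card
  haveI : Finite V := Module.finite_iff_finite.mp (inferInstance : Module.Finite F V)
  haveI : Fintype V := Fintype.ofFinite V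
  haveI : Finite (Submodule F V) :=
    Finite.of_injective (fun W => (W : Set V)) SetLike.coe_injective
  haveI : Fintype (Submodule F V) := Fintype.ofFinite _
  -- the finset of 1-dimensional subspaces
  set P : Finset (Submodule F V) := {W : Submodule F V | finrank F W = 1}.toFinset with hP
  have hPcard : {W : Submodule F V | finrank F W = 1}.ncard = P.card := by
    rw [hP, Set.ncard_eq_toFinset_card']
  rw [hPcard]
  -- nonzero vectors
  set s : Finset V := Finset.univ.filter (fun v => v ≠ 0) with hs
  have hmem : ∀ v ∈ s, Submodule.span F {v} ∈ P := by
    intro v hv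
    rw [hs, Finset.mem_filter] at hv
    rw [hP, Set.mem_toFinset]
    exact finrank_span_singleton hv.2
  have hsum := Finset.card_eq_sum_card_fiberwise hmem
  -- each fiber has at least q - 1 elements
  have hfiber : ∀ W ∈ P, q - 1 ≤ (s.filter (fun v => Submodule.span F {v} = W)).card := by
    intro W hW
    rw [hP, Set.mem_toFinset] at hW
    have hW : finrank F W = 1 := hW
    have hWbot : W ≠ ⊥ := by
      intro h
      rw [h, finrank_bot] at hW; simp at hW
    obtain ⟨w, hwW, hw0⟩ := W.ne_bot_iff.mp hWbot
    have hspan : ∀ c : F, c ≠ 0 → Submodule.span F {c • w} = W := by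
      intro c hc
      rw [Submodule.span_singleton_smul_eq (IsUnit.mk0 c hc)]
      refine Submodule.eq_of_le_of_finrank_eq ?_ ?_
      · rwa [Submodule.span_singleton_le_iff_mem]
      · rw [finrank_span_singleton hw0, hW]
    have hinj : Set.InjOn (fun c : F => c • w)
        ((Finset.univ.filter (fun c : F => c ≠ 0)) : Finset F) := by
      intro a _ b _ hab
      exact smul_left_injective F hw0 hab
    calc q - 1 = (Finset.univ.filter (fun c : F => c ≠ 0)).card := by
          rw [hq]
          simp [Finset.filter_ne', Finset.card_erase_of_mem]
      _ = ((Finset.univ.filter (fun c : F => c ≠ 0)).image (fun c : F => c • w)).card := by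
          rw [Finset.card_image_of_injOn hinj]
      _ ≤ _ := by
          apply Finset.card_le_card
          intro v hv
          rw [Finset.mem_image] at hv
          obtain ⟨c, hc, rfl⟩ := hv
          rw [Finset.mem_filter] at hc
          rw [Finset.mem_filter]
          refine ⟨?_, hspan c hc.2⟩
          rw [hs, Finset.mem_filter]
          exact ⟨Finset.mem_univ _, smul_ne_zero hc.2 hw0⟩
  have hlow : P.card * (q - 1) ≤ s.card := by
    rw [hsum]
    calc P.card * (q - 1) = ∑ _W ∈ P, (q - 1) := by
          rw [Finset.sum_const, smul_eq_mul, mul_comm]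
      _ ≤ _ := Finset.sum_le_sum hfiber
  have hscard : s.card ≤ q ^ 2 - 1 := by
    have h1 : s.card = Fintype.card V - 1 := by
      rw [hs]
      simp [Finset.filter_ne', Finset.card_erase_of_mem]
    have h2' : Fintype.card V = q ^ finrank F V := card_eq_pow_finrank
    have h3 : (q : ℕ) ^ finrank F V ≤ q ^ 2 :=
      Nat.pow_le_pow_right (by omega) h2
    omega
  have hfin : P.card * (q - 1) ≤ (q + 1) * (q - 1) := by
    calc P.card * (q - 1) ≤ q ^ 2 - 1 := le_trans hlow hscard
      _ = (q + 1) * (q - 1) := by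
          obtain ⟨k, hk⟩ : ∃ k, q = k + 2 := ⟨q - 2, by omega⟩
          have e1 : (k + 2) ^ 2 = k * k + 4 * k + 4 := by ring
          have e2 : (k + 2 + 1) * (k + 2 - 1) = k * k + 4 * k + 3 := by
            simp; ring
          rw [hk, e1, e2]; omega
  exact Nat.le_of_mul_le_mul_right hfin (by omega)

section
variable {F : Type} [Field F] [Fintype F]
  {V : Type} [AddCommGroup V] [Module F V] [FiniteDimensional F V]

/-- At most `q+1` one-dimensional subspaces inside a subspace of dimension at most 2. -/
lemma card_points_le (U : Submodule F V) (h2 : finrank F U ≤ 2) :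
    {W : Submodule F V | finrank F W = 1 ∧ W ≤ U}.ncard ≤ Fintype.card F + 1 := by
  classical
  refine le_trans ?_ (card_one_dim_le (V := U) h2)
  haveI : Finite V := Module.finite_iff_finite.mp (inferInstance : Module.Finite F V)
  haveI : Finite (Submodule F U) :=
    Finite.of_injective (fun W => (W : Set U)) SetLike.coe_injective
  apply Set.ncard_le_ncard_of_injOn (fun W => W.comap U.subtype)
  · rintro W ⟨hW1, hWU⟩
    have hmap : (W.comap U.subtype).map U.subtype = W := by
      rw [Submodule.map_comap_subtype, inf_eq_right.mpr hWU]
    have := Submodule.finrank_map_subtype_eq U (W.comap U.subtype)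
    rw [hmap] at this
    exact Set.mem_setOf_eq ▸ (this.symm.trans hW1)
  · rintro W ⟨hW1, hWU⟩ W' ⟨hW'1, hW'U⟩ h
    have : (W.comap U.subtype).map U.subtype = (W'.comap U.subtype).map U.subtype :=
      congrArg (Submodule.map U.subtype) h
    rwa [Submodule.map_comap_subtype, Submodule.map_comap_subtype,
      inf_eq_right.mpr hWU, inf_eq_right.mpr hW'U] at this

/-- At most `q+1` two-dimensional subspaces contain a given 1-dimensional subspace of a
3-dimensional space. -/
lemma card_lines_le (Q : Submodule F V) (hQ : finrank F Q = 1) (h3 : finrank F V ≤ 3) :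
    {L : Submodule F V | finrank F L = 2 ∧ Q ≤ L}.ncard ≤ Fintype.card F + 1 := by
  classical
  have hquot : finrank F (V ⧸ Q) ≤ 2 := by
    have := Q.finrank_quotient_add_finrank
    omega
  refine le_trans ?_ (card_one_dim_le (V := V ⧸ Q) hquot)
  haveI : Finite V := Module.finite_iff_finite.mp (inferInstance : Module.Finite F V)
  haveI : Finite (V ⧸ Q) := Quotient.finite _
  haveI : Finite (Submodule F (V ⧸ Q)) :=
    Finite.of_injective (fun W => (W : Set (V ⧸ Q))) SetLike.coe_injective
  apply Set.ncard_le_ncard_of_injOn (fun L => L.map Q.mkQ)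
  · rintro L ⟨hL2, hQL⟩
    show finrank F (L.map Q.mkQ) = 1
    have hrange : L.map Q.mkQ = LinearMap.range (Q.mkQ ∘ₗ L.subtype) := by
      rw [LinearMap.range_comp, Submodule.range_subtype]
    have hrank := LinearMap.finrank_range_add_finrank_ker (Q.mkQ ∘ₗ L.subtype)
    have hker : LinearMap.ker (Q.mkQ ∘ₗ L.subtype) = Q.comap L.subtype := by
      rw [LinearMap.ker_comp, Submodule.ker_mkQ]
    have hkerrank : finrank F (LinearMap.ker (Q.mkQ ∘ₗ L.subtype)) = 1 := by
      rw [hker]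
      have := Submodule.finrank_map_subtype_eq L (Q.comap L.subtype)
      rw [Submodule.map_comap_subtype, inf_eq_right.mpr hQL] at this
      rw [← this]; exact hQ
    rw [hrange]
    omega
  · rintro L ⟨hL2, hQL⟩ L' ⟨hL'2, hQ'L⟩ h
    have : (L.map Q.mkQ).comap Q.mkQ = (L'.map Q.mkQ).comap Q.mkQ :=
      congrArg (Submodule.comap Q.mkQ) h
    rwa [Submodule.comap_map_mkQ, Submodule.comap_map_mkQ,
      sup_of_le_right hQL, sup_of_le_right hQ'L] at this

set_option linter.unusedSectionVars false in
/-- Two distinct 1-dimensional subspaces span a 2-dimensional subspace. -/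
lemma finrank_sup_eq_two {P R : Submodule F V} (hP : finrank F P = 1)
    (hR : finrank F R = 1) (hne : P ≠ R) : finrank F (P ⊔ R : Submodule F V) = 2 := by
  have h := Submodule.finrank_sup_add_finrank_inf_eq P R
  have hinf : finrank F (P ⊓ R : Submodule F V) = 0 := by
    by_contra h0
    have h1 : finrank F (P ⊓ R : Submodule F V) ≤ 1 := by
      have := Submodule.finrank_mono (inf_le_left : P ⊓ R ≤ P)
      omega
    have h1' : finrank F (P ⊓ R : Submodule F V) = 1 := by omega
    have hPeq : P ⊓ R = P := Submodule.eq_of_le_of_finrank_eq inf_le_left (by omega)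
    have hReq : P ⊓ R = R := Submodule.eq_of_le_of_finrank_eq inf_le_right (by omega)
    exact hne (hPeq.symm.trans hReq)
  omega
end

section
variable {F : Type} [Field F] [Fintype F]

lemma pg_finite : Finite (Submodule F (Fin 3 → F)) :=
  Finite.of_injective (fun W => (W : Set (Fin 3 → F))) SetLike.coe_injective

/-- Key counting lemma: every point `Q ∉ S` lies on at least `|S| - (q+1)` secant pairs. -/
lemma key_count (S : Set (PGPoint F 2)) (Q : PGPoint F 2) (hQ : Q ∉ S) :
    S.ncard ≤ pairCount S Q + (Fintype.card F + 1) := by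
  classical
  haveI : Finite (Submodule F (Fin 3 → F)) := pg_finite
  set q := Fintype.card F with hq
  set ℓ : PGPoint F 2 → Submodule F (Fin 3 → F) := fun P => Q.1 ⊔ P.1 with hℓ
  set T : Set (Submodule F (Fin 3 → F)) := ℓ '' S with hT
  have hQP : ∀ P ∈ S, Q.1 ≠ P.1 := by
    intro P hP h
    exact hQ ((Subtype.ext h : Q = P) ▸ hP)
  have hline : ∀ P ∈ S, finrank F (ℓ P) = 2 :=
    fun P hP => finrank_sup_eq_two Q.2 P.2 (hQP P hP)
  have hTle : T.ncard ≤ q + 1 := by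
    refine le_trans (Set.ncard_le_ncard ?_ (Set.toFinite _))
      (card_lines_le Q.1 Q.2 (by rw [Module.finrank_fin_fun]))
    rintro L ⟨P, hP, rfl⟩
    exact ⟨hline P hP, le_sup_left⟩
  have hrex : ∀ L ∈ T, ∃ P, P ∈ S ∧ ℓ P = L := by
    rintro L ⟨P, hP, rfl⟩; exact ⟨P, hP, rfl⟩
  haveI : Nonempty (PGPoint F 2) := by
    refine ⟨⟨Submodule.span F {fun _ => 1}, finrank_span_singleton ?_⟩⟩
    intro h
    exact one_ne_zero (congrFun h 0)
  choose! r hr1 hr2 using hrex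
  set R : Set (PGPoint F 2) := r '' T with hR
  have hRS : R ⊆ S := by rintro _ ⟨L, hL, rfl⟩; exact hr1 L hL
  set g : PGPoint F 2 → Set (PGPoint F 2) := fun P => {P, r (ℓ P)} with hg
  have hℓT : ∀ P ∈ S, ℓ P ∈ T := fun P hP => ⟨P, hP, rfl⟩
  have hmaps : ∀ P ∈ S \ R, g P ∈ {e : Set (PGPoint F 2) |
      ∃ A ∈ S, ∃ B ∈ S, A ≠ B ∧ e = {A, B} ∧ Q.1 ≤ A.1 ⊔ B.1} := by
    rintro P ⟨hPS, hPR⟩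
    have hLT : ℓ P ∈ T := hℓT P hPS
    set b := r (ℓ P) with hb
    have hbS : b ∈ S := hr1 _ hLT
    have hbl : ℓ b = ℓ P := hr2 _ hLT
    have hne : P ≠ b := fun h => hPR ⟨ℓ P, hLT, h.symm⟩
    have hvne : P.1 ≠ b.1 := fun h => hne (Subtype.ext h)
    have hle : P.1 ⊔ b.1 ≤ ℓ P :=
      sup_le le_sup_right (hbl ▸ (le_sup_right : b.1 ≤ ℓ b))
    have heq : P.1 ⊔ b.1 = ℓ P := by
      refine Submodule.eq_of_le_of_finrank_eq hle ?_
      rw [finrank_sup_eq_two P.2 b.2 hvne, hline P hPS]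
    exact ⟨P, hPS, b, hbS, hne, rfl, heq ▸ (le_sup_left : Q.1 ≤ ℓ P)⟩
  have hinj : Set.InjOn g (S \ R) := by
    rintro P ⟨hPS, hPR⟩ P' ⟨hP'S, hP'R⟩ h
    have hPmem : P ∈ ({P', r (ℓ P')} : Set (PGPoint F 2)) := by
      have : P ∈ g P := Set.mem_insert _ _
      rwa [h] at this
    rcases hPmem with h1 | h1
    · exact h1
    · exact absurd ⟨ℓ P', hℓT P' hP'S, h1.symm⟩ hPR
  have h1 : (S \ R).ncard ≤ pairCount S Q :=
    Set.ncard_le_ncard_of_injOn g hmaps hinj (Set.toFinite _)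
  have h2 : (S \ R).ncard = S.ncard - R.ncard :=
    Set.ncard_diff hRS (Set.toFinite _)
  have h3 : R.ncard ≤ S.ncard := Set.ncard_le_ncard hRS (Set.toFinite _)
  have h4 : R.ncard ≤ q + 1 :=
    le_trans (Set.ncard_image_le (Set.toFinite _)) hTle
  omega

/-- A set of more than `q+1` points of `PG(2,q)` spans the plane. -/
lemma spans_of_card (S : Set (PGPoint F 2))
    (h : Fintype.card F + 2 ≤ S.ncard) : Spans S := by
  classical
  haveI : Finite (Submodule F (Fin 3 → F)) := pg_finite
  by_contra h'
  set W := ⨆ P ∈ S, P.1 with hW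
  have hWlt : W < ⊤ := lt_top_iff_ne_top.mpr h'
  have hWr : finrank F W ≤ 2 := by
    have h1 := Submodule.finrank_lt hWlt.ne
    rw [Module.finrank_fin_fun] at h1
    omega
  have hmaps : ∀ P ∈ S,
      P.1 ∈ {W' : Submodule F (Fin 3 → F) | finrank F W' = 1 ∧ W' ≤ W} := by
    intro P hP
    exact ⟨P.2, le_biSup _ hP⟩
  have hinj : Set.InjOn (fun P : PGPoint F 2 => P.1) S := fun a _ b _ h => Subtype.ext h
  have hc1 := Set.ncard_le_ncard_of_injOn _ hmaps hinj (Set.toFinite _)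
  have hc2 := card_points_le W hWr
  have hc3 := le_trans hc1 hc2
  omega
end

/-- Let `q > 2` and `1 ≤ μ ≤ q+2`. Every set `S` of `q+μ+1`
points of `PG(2,q)` is such that each point `Q ∉ S` lies on at least `μ`
unordered pairs of distinct points of `S` collinear with `Q`; consequently if
`S ≠ PG(2,q)` then `S` is `(1,μ)`-saturating, and every minimal
`(1,μ)`-saturating set of `PG(2,q)` has size at most `q+μ+1`. -/
theorem stmt_10 (F : Type) [Field F] [Fintype F] (q μ : ℕ)
    (hq : Fintype.card F = q) (hq2 : 2 < q) (hμ1 : 1 ≤ μ) (hμ2 : μ ≤ q + 2) :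
    (∀ S : Set (PGPoint F 2), S.ncard = q + μ + 1 →
      (∀ Q : PGPoint F 2, Q ∉ S → μ ≤ pairCount S Q) ∧
      (S ≠ Set.univ → IsSaturating S μ)) ∧
    ∀ S : Set (PGPoint F 2), IsMinimalSaturating S μ → S.ncard ≤ q + μ + 1 := by
  classical
  subst hq
  have hkey : ∀ S : Set (PGPoint F 2), S.ncard = Fintype.card F + μ + 1 →
      ∀ Q : PGPoint F 2, Q ∉ S → μ ≤ pairCount S Q := by
    intro S hS Q hQ
    have := key_count S Q hQ
    omega
  constructor
  · intro S hS
    exact ⟨hkey S hS, fun hne => ⟨spans_of_card S (by omega), hne, hkey S hS⟩⟩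
  · intro S hS
    obtain ⟨⟨hspan, hSuniv, hsat⟩, hmin⟩ := hS
    by_contra hbig
    push_neg at hbig
    obtain ⟨T, hTS, hTcard⟩ :=
      Set.exists_subset_card_eq (show Fintype.card F + μ + 1 ≤ S.ncard by omega)
    have hTne : T ≠ S := by
      intro h; rw [h] at hTcard; omega
    refine hmin T (HasSubset.Subset.ssubset_of_ne hTS hTne) ⟨?_, ?_, ?_⟩
    · exact spans_of_card T (by omega)
    · intro h
      exact hSuniv (Set.eq_univ_of_univ_subset (h ▸ hTS))
    · intro Q hQ
      have := key_count T Q hQ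
      omega
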